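/- Let τ ∈ ℝ, s > 0, a > 0, α ∈ (0,1), and let W be a Gaussian random variable with mean τ and variance s². Then the expected interval score of the interval [W − a, W + a] at τ satisfies E[S_int(W − a, W + a; τ)] = 2a + (4s/α)·(φ(a/s) − (a/s)·Φ̄(a/s)). -/

import Mathlib

open MeasureTheory ProbabilityTheory Set
open NNReal ENNReal Filter

/-- The interval score of the interval `[ℓ, u]` at observation `τ`, at level `α`. -/
noncomputable def Sint (α ℓ u τ : ℝ) : ℝ :=
  (u - ℓ) + (2 / α) * (ℓ - τ) * (if τ < ℓ then 1 else 0)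
    + (2 / α) * (τ - u) * (if u < τ then 1 else 0)

/-- The standard normal density `φ(t) = (2π)^{-1/2} exp(-t²/2)`. -/
noncomputable def phi (t : ℝ) : ℝ := (Real.sqrt (2 * Real.pi))⁻¹ * Real.exp (-t ^ 2 / 2)

/-- The standard normal cumulative distribution function `Φ`. -/
noncomputable def Phi (t : ℝ) : ℝ := ((gaussianReal 0 1) (Iic t)).toReal

lemma pdf_eq_phi (x : ℝ) : gaussianPDFReal 0 1 x = phi x := by
  simp [gaussianPDFReal, phi]

lemma integral_gauss_eq (g : ℝ → ℝ) :
    ∫ x, g x ∂(gaussianReal 0 1) = ∫ x, phi x * g x := by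
  rw [gaussianReal_of_var_ne_zero _ one_ne_zero]
  have h : (gaussianPDF 0 1) = fun x => ((Real.toNNReal (gaussianPDFReal 0 1 x) : ℝ≥0) : ℝ≥0∞) :=
    rfl
  rw [h, integral_withDensity_eq_integral_smul
    ((measurable_gaussianPDFReal 0 1).real_toNNReal)]
  congr 1; ext x
  rw [NNReal.smul_def, Real.coe_toNNReal _ (gaussianPDFReal_nonneg 0 1 x), pdf_eq_phi]
  simp [smul_eq_mul]

lemma hasDerivAt_neg_phi (x : ℝ) : HasDerivAt (fun t => -phi t) (x * phi x) x := by
  have h : HasDerivAt (fun t : ℝ => -t ^ 2 / 2) (-x) x := by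
    have := ((hasDerivAt_pow 2 x).neg).div_const 2
    refine this.congr_deriv ?_; ring
  have h2 := ((h.exp).const_mul ((Real.sqrt (2 * Real.pi))⁻¹)).neg
  refine h2.congr_deriv ?_
  simp only [phi]; ring

lemma integrable_phi : Integrable phi := by
  have h : phi = fun x => (Real.sqrt (2 * Real.pi))⁻¹ * Real.exp (-(1/2) * x ^ 2) := by
    funext x; simp only [phi]; ring_nf
  rw [h]
  exact (integrable_exp_neg_mul_sq (by norm_num)).const_mul _

lemma integrable_mul_phi : Integrable (fun x => x * phi x) := by
  have h : (fun x => x * phi x)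
      = fun x => (Real.sqrt (2 * Real.pi))⁻¹ * (x * Real.exp (-(1/2) * x ^ 2)) := by
    funext x; simp only [phi]; ring_nf
  rw [h]
  exact (integrable_mul_exp_neg_mul_sq (by norm_num)).const_mul _

lemma continuous_phi : Continuous phi := by
  unfold phi; fun_prop

lemma phi_nonneg (x : ℝ) : 0 ≤ phi x := by
  unfold phi; positivity

lemma phi_neg (x : ℝ) : phi (-x) = phi x := by simp [phi]

lemma tendsto_phi : Tendsto phi atTop (nhds 0) := by
  have h1 : Tendsto (fun x : ℝ => -x ^ 2 / 2) atTop atBot := by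
    apply Tendsto.atBot_div_const (by norm_num)
    exact tendsto_neg_atBot_iff.mpr (tendsto_pow_atTop two_ne_zero)
  have h2 : Tendsto (fun x : ℝ => Real.exp (-x ^ 2 / 2)) atTop (nhds 0) :=
    Real.tendsto_exp_atBot.comp h1
  have h3 := h2.const_mul ((Real.sqrt (2 * Real.pi))⁻¹)
  rw [mul_zero] at h3; exact h3

lemma integral_phi : ∫ x, phi x = 1 := by
  have := integral_gaussianPDFReal_eq_one 0 one_ne_zero
  simpa [pdf_eq_phi] using this

lemma integral_Ioi_mul_phi (c : ℝ) : ∫ x in Ioi c, x * phi x = phi c := by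
  have := integral_Ioi_of_hasDerivAt_of_tendsto (f := fun t => -phi t) (f' := fun x => x * phi x)
    (a := c) (m := 0) ((hasDerivAt_neg_phi c).continuousAt).continuousWithinAt
    (fun x _ => hasDerivAt_neg_phi x) integrable_mul_phi.integrableOn
    (by simpa using tendsto_phi.neg)
  simpa using this

lemma integral_Ioi_phi (c : ℝ) : ∫ x in Ioi c, phi x = 1 - Phi c := by
  have h1 : (gaussianReal 0 1) (Ioi c)
      = ENNReal.ofReal (∫ x in Ioi c, gaussianPDFReal 0 1 x) :=
    gaussianReal_apply_eq_integral 0 one_ne_zero (Ioi c)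
  have hnn : 0 ≤ ∫ x in Ioi c, gaussianPDFReal 0 1 x :=
    integral_nonneg (fun _ => gaussianPDFReal_nonneg _ _ _)
  have h2 : ((gaussianReal 0 1) (Ioi c)).toReal = ∫ x in Ioi c, gaussianPDFReal 0 1 x := by
    rw [h1, ENNReal.toReal_ofReal hnn]
  have h3 : (gaussianReal 0 1) (Ioi c) = 1 - (gaussianReal 0 1) (Iic c) := by
    rw [← compl_Iic, measure_compl measurableSet_Iic (measure_ne_top _ _), measure_univ]
  have h4 : ((gaussianReal 0 1) (Ioi c)).toReal = 1 - Phi c := by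
    rw [h3, ENNReal.toReal_sub_of_le prob_le_one one_ne_top, ENNReal.toReal_one, Phi]
  rw [← h4, h2]
  simp_rw [pdf_eq_phi]

lemma integrable_phi_max (c : ℝ) : Integrable (fun x => phi x * max (x - c) 0) := by
  apply Integrable.mono' ((integrable_mul_phi.abs).add (integrable_phi.const_mul |c|))
  · exact (continuous_phi.mul ((continuous_id.sub continuous_const).max
      continuous_const)).aestronglyMeasurable
  · filter_upwards with x
    rw [Real.norm_eq_abs, abs_of_nonneg (mul_nonneg (phi_nonneg x) (le_max_right _ _))]
    have h1 : max (x - c) 0 ≤ |x| + |c| := by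
      rcases le_total (x - c) 0 with h | h
      · simp [max_eq_right h]; positivity
      · rw [max_eq_left h]
        calc x - c ≤ |x - c| := le_abs_self _
        _ ≤ |x| + |c| := abs_sub _ _
    calc phi x * max (x - c) 0 ≤ phi x * (|x| + |c|) :=
          mul_le_mul_of_nonneg_left h1 (phi_nonneg x)
      _ = |x| * phi x + |c| * phi x := by ring
      _ ≤ |x * phi x| + |c| * phi x := by
          gcongr
          rw [abs_mul, abs_of_nonneg (phi_nonneg x)]

lemma integral_phi_max (c : ℝ) :
    ∫ x, phi x * max (x - c) 0 = phi c - c * (1 - Phi c) := by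
  have h : (fun x => phi x * max (x - c) 0)
      = (Ioi c).indicator (fun x => x * phi x - c * phi x) := by
    funext x
    by_cases hx : c < x
    · rw [indicator_of_mem (mem_Ioi.mpr hx), max_eq_left (by linarith)]; ring
    · rw [indicator_of_notMem (fun h => hx (mem_Ioi.mp h)), max_eq_right (by simp at hx; linarith), mul_zero]
  rw [h, integral_indicator measurableSet_Ioi,
    integral_sub integrable_mul_phi.integrableOn ((integrable_phi.const_mul c).integrableOn),
    integral_const_mul, integral_Ioi_mul_phi, integral_Ioi_phi]

lemma integral_phi_max_neg (c : ℝ) :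
    ∫ x, phi x * max (-x - c) 0 = phi c - c * (1 - Phi c) := by
  rw [← integral_phi_max c, ← integral_neg_eq_self (fun x => phi x * max (x - c) 0)]
  congr 1; funext x
  rw [phi_neg]

lemma integrable_phi_max_neg (c : ℝ) : Integrable (fun x => phi x * max (-x - c) 0) := by
  apply Integrable.mono' ((integrable_mul_phi.abs).add (integrable_phi.const_mul |c|))
  · exact (continuous_phi.mul ((continuous_id.neg.sub continuous_const).max
      continuous_const)).aestronglyMeasurable
  · filter_upwards with x
    rw [Real.norm_eq_abs, abs_of_nonneg (mul_nonneg (phi_nonneg x) (le_max_right _ _))]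
    have h1 : max (-x - c) 0 ≤ |x| + |c| := by
      rcases le_total (-x - c) 0 with h | h
      · simp [max_eq_right h]; positivity
      · rw [max_eq_left h]
        calc -x - c ≤ |(-x) - c| := le_abs_self _
        _ ≤ |(-x)| + |c| := abs_sub _ _
        _ = |x| + |c| := by rw [abs_neg]
    calc phi x * max (-x - c) 0 ≤ phi x * (|x| + |c|) :=
          mul_le_mul_of_nonneg_left h1 (phi_nonneg x)
      _ = |x| * phi x + |c| * phi x := by ring
      _ ≤ |x * phi x| + |c| * phi x := by
          gcongr
          rw [abs_mul, abs_of_nonneg (phi_nonneg x)]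

/-- For `W ~ N(τ, s²)`, the expected interval score of `[W − a, W + a]` at `τ` is
`2a + (4s/α) (φ(a/s) − (a/s) Φ̄(a/s))`. -/
theorem stmt7 (τ s a α : ℝ) (hs : 0 < s) (ha : 0 < a) (hα : α ∈ Ioo (0 : ℝ) 1) :
    (∫ w, Sint α (w - a) (w + a) τ ∂(gaussianReal τ (Real.toNNReal (s ^ 2))))
      = 2 * a + (4 * s / α) * (phi (a / s) - (a / s) * (1 - Phi (a / s))) := by
  obtain ⟨hα0, hα1⟩ := hα
  have hsne : s ≠ 0 := hs.ne'
  have hαne : α ≠ 0 := hα0.ne'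
  set c : ℝ := a / s with hc
  have hvar : (⟨s^2, sq_nonneg s⟩ : ℝ≥0) * 1 = Real.toNNReal (s^2) := by
    ext; simp [Real.coe_toNNReal _ (sq_nonneg s)]
  have hmap : gaussianReal τ (Real.toNNReal (s^2))
      = Measure.map (fun x => s * x + τ) (gaussianReal 0 1) := by
    have h1 : Measure.map (fun x => s * x + τ) (gaussianReal 0 1)
        = Measure.map (fun x => x + τ) (Measure.map (fun x => s * x) (gaussianReal 0 1)) := by
      rw [Measure.map_map (measurable_id'.add_const τ) (measurable_const_mul s)]
      rfl
    rw [h1, gaussianReal_map_const_mul s, gaussianReal_map_add_const τ, mul_zero, zero_add]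
    exact congrArg _ hvar.symm
  have hmeas : Measurable (fun w : ℝ => Sint α (w - a) (w + a) τ) := by
    unfold Sint
    have m1 : Measurable fun w : ℝ => (if τ < w - a then (1:ℝ) else 0) :=
      Measurable.ite (measurableSet_lt measurable_const (measurable_id.sub_const a))
        measurable_const measurable_const
    have m2 : Measurable fun w : ℝ => (if w + a < τ then (1:ℝ) else 0) :=
      Measurable.ite (measurableSet_lt (measurable_id.add_const a) measurable_const)
        measurable_const measurable_const
    exact (((measurable_id.add_const a).sub (measurable_id.sub_const a)).add
      ((measurable_const.mul ((measurable_id.sub_const a).sub_const τ)).mul m1)).add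
      ((measurable_const.mul (measurable_const.sub (measurable_id.add_const a))).mul m2)
  rw [hmap, integral_map ((measurable_const_mul s).add_const τ).aemeasurable
    hmeas.aestronglyMeasurable]
  have hpt : ∀ x : ℝ, Sint α (s * x + τ - a) (s * x + τ + a) τ
      = 2*a + (2*s/α) * (max (x - c) 0 + max (-x - c) 0) := by
    intro x
    unfold Sint
    have e1 : s * x + τ + a - (s * x + τ - a) = 2*a := by ring
    have e2 : (2/α) * (s * x + τ - a - τ) * (if τ < s * x + τ - a then 1 else 0)
        = (2*s/α) * max (x - c) 0 := by
      by_cases h : c < x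
      · have hx : a < s * x := by
          have h2 := (div_lt_iff₀ hs).mp h
          linarith [mul_comm x s]
        have hsc : s * c = a := by rw [hc]; field_simp
        rw [if_pos (by linarith), max_eq_left (by linarith), ← hsc]
        ring
      · have hx : s * x ≤ a := by
          have h2 := (le_div_iff₀ hs).mp (not_lt.mp h)
          linarith [mul_comm x s]
        rw [if_neg (by intro hh; linarith), max_eq_right (by simp only [not_lt] at h; linarith)]
        ring
    have e3 : (2/α) * (τ - (s * x + τ + a)) * (if s * x + τ + a < τ then 1 else 0)
        = (2*s/α) * max (-x - c) 0 := by
      by_cases h : x < -c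
      · have hx : s * x < -a := by
          have h2 : x < -a / s := by rw [neg_div]; exact h
          have h3 := (lt_div_iff₀ hs).mp h2
          linarith [mul_comm x s]
        have hsc : s * c = a := by rw [hc]; field_simp
        rw [if_pos (by linarith), max_eq_left (by linarith), ← hsc]
        ring
      · have hx : -a ≤ s * x := by
          have h2 : -a / s ≤ x := by rw [neg_div]; exact le_of_not_gt h
          have h3 := (div_le_iff₀ hs).mp h2
          linarith [mul_comm x s]
        rw [if_neg (by intro hh; linarith), max_eq_right (by simp only [not_lt] at h; linarith)]
        ring
    rw [e1, e2, e3]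
    ring
  simp only [hpt]
  rw [integral_gauss_eq]
  have hexp : ∀ x : ℝ, phi x * (2*a + (2*s/α) * (max (x - c) 0 + max (-x - c) 0))
      = ((2*a) * phi x + (2*s/α) * (phi x * max (x - c) 0))
        + (2*s/α) * (phi x * max (-x - c) 0) := fun x => by ring
  simp only [hexp]
  have i1 : Integrable (fun x => 2*a * phi x) := integrable_phi.const_mul (2*a)
  have i2 : Integrable (fun x => 2*s/α * (phi x * max (x - c) 0)) :=
    (integrable_phi_max c).const_mul _
  have i3 : Integrable (fun x => 2*s/α * (phi x * max (-x - c) 0)) :=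
    (integrable_phi_max_neg c).const_mul _
  have i12 : Integrable (fun x => 2*a * phi x + 2*s/α * (phi x * max (x - c) 0)) := i1.add i2
  rw [integral_add i12 i3, integral_add i1 i2,
    integral_const_mul, integral_const_mul, integral_const_mul,
    integral_phi, integral_phi_max, integral_phi_max_neg]
  ring
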